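/- Let A, Q : ℝ → Matrix (Fin n) (Fin n) ℝ and B : ℝ → Matrix (Fin n) (Fin m) ℝ be given with Q(t) symmetric for every t, and define the Hamiltonian matrix M(t) as the 2n×2n block matrix M(t) = [[A(t), −B(t)B(t)ᵀ],[−Q(t), −A(t)ᵀ]]. Suppose Φ : ℝ → Matrix (Fin n ⊕ Fin n) (Fin n ⊕ Fin n) ℝ satisfies, for every t, HasDerivAt Φ (M(t) · Φ(t)) t, and Φ(s) is the identity matrix for some s ∈ ℝ. Then for every t ∈ ℝ, the four n×n blocks Φ₁₁(t), Φ₁₂(t), Φ₂₁(t), Φ₂₂(t) of Φ(t) satisfy the symplectic block identities (i)–(vi). -/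

import Mathlib

open Matrix

attribute [instance] Matrix.normedAddCommGroup Matrix.normedSpace

/-- The symplectic block identities (i)–(vi) for four `n × n` real matrices. -/
def SymplecticBlocks {n : ℕ} (P11 P12 P21 P22 : Matrix (Fin n) (Fin n) ℝ) : Prop :=
  P11ᵀ * P22 - P21ᵀ * P12 = 1 ∧
  P12ᵀ * P22 - P22ᵀ * P12 = 0 ∧
  P21ᵀ * P11 - P11ᵀ * P21 = 0 ∧
  P11 * P22ᵀ - P12 * P21ᵀ = 1 ∧
  P12 * P11ᵀ - P11 * P12ᵀ = 0 ∧
  P21 * P22ᵀ - P22 * P21ᵀ = 0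

section Aux

variable {n : ℕ}

/-- Matrix multiplication as a continuous bilinear map. -/
noncomputable def mulCLM (n : ℕ) :
    Matrix (Fin n ⊕ Fin n) (Fin n ⊕ Fin n) ℝ →L[ℝ]
      Matrix (Fin n ⊕ Fin n) (Fin n ⊕ Fin n) ℝ →L[ℝ]
        Matrix (Fin n ⊕ Fin n) (Fin n ⊕ Fin n) ℝ :=
  LinearMap.toContinuousLinearMap
  { toFun := fun X => LinearMap.toContinuousLinearMap
      { toFun := fun Y => X * Y
        map_add' := fun Y Z => Matrix.mul_add _ _ _
        map_smul' := fun c Y => Matrix.mul_smul _ _ _ }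
    map_add' := fun X Y => by
      ext Z
      simp [Matrix.add_mul]
    map_smul' := fun c X => by
      ext Z
      simp [Matrix.smul_mul] }

@[simp] theorem mulCLM_apply (X Y : Matrix (Fin n ⊕ Fin n) (Fin n ⊕ Fin n) ℝ) :
    mulCLM n X Y = X * Y := rfl

/-- Matrix transpose as a continuous linear map. -/
noncomputable def trCLM (n : ℕ) :
    Matrix (Fin n ⊕ Fin n) (Fin n ⊕ Fin n) ℝ →L[ℝ]
      Matrix (Fin n ⊕ Fin n) (Fin n ⊕ Fin n) ℝ :=
  LinearMap.toContinuousLinearMap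
    (Matrix.transposeLinearEquiv (Fin n ⊕ Fin n) (Fin n ⊕ Fin n) ℝ ℝ).toLinearMap

@[simp] theorem trCLM_apply (X : Matrix (Fin n ⊕ Fin n) (Fin n ⊕ Fin n) ℝ) :
    trCLM n X = Xᵀ := rfl

end Aux

/-- the state transition kernel of the linear-quadratic Hamiltonian system
`M(t) = [[A, -BBᵀ], [-Q, -Aᵀ]]` has blocks satisfying the symplectic block identities. -/
theorem symplecticBlocks_of_hamiltonian_transition {n m : ℕ}
    (A Q : ℝ → Matrix (Fin n) (Fin n) ℝ) (B : ℝ → Matrix (Fin n) (Fin m) ℝ)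
    (hQ : ∀ t, (Q t)ᵀ = Q t)
    (Φ : ℝ → Matrix (Fin n ⊕ Fin n) (Fin n ⊕ Fin n) ℝ)
    (hΦ : ∀ t, HasDerivAt Φ
      (Matrix.fromBlocks (A t) (-(B t * (B t)ᵀ)) (-(Q t)) (-(A t)ᵀ) * Φ t) t)
    (s : ℝ) (hΦs : Φ s = 1) :
    ∀ t, SymplecticBlocks ((Φ t).toBlocks₁₁) ((Φ t).toBlocks₁₂)
      ((Φ t).toBlocks₂₁) ((Φ t).toBlocks₂₂) := by
  set M : ℝ → Matrix (Fin n ⊕ Fin n) (Fin n ⊕ Fin n) ℝ :=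
    fun t => Matrix.fromBlocks (A t) (-(B t * (B t)ᵀ)) (-(Q t)) (-(A t)ᵀ) with hM
  set J : Matrix (Fin n ⊕ Fin n) (Fin n ⊕ Fin n) ℝ :=
    Matrix.fromBlocks 0 1 (-1) 0 with hJ
  have hJJ : J * J = -1 := by
    rw [hJ, Matrix.fromBlocks_multiply, ← Matrix.fromBlocks_one]
    rw [Matrix.fromBlocks_neg]
    congr 1 <;> simp
  have hkey : ∀ t, (M t)ᵀ * J + J * M t = 0 := by
    intro t
    simp [hM, hJ, Matrix.fromBlocks_transpose, Matrix.fromBlocks_multiply,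
      Matrix.fromBlocks_add, hQ, Matrix.transpose_mul]
  -- the function t ↦ Φᵀ J Φ is constant
  have hg : ∀ t, HasDerivAt (fun t => (Φ t)ᵀ * J * Φ t) 0 t := by
    intro t
    have hT : HasDerivAt (fun t => (Φ t)ᵀ) ((M t * Φ t)ᵀ) t := by
      have := (trCLM n).hasFDerivAt.comp_hasDerivAt t (hΦ t)
      exact this
    have h1 : HasDerivAt (fun t => (Φ t)ᵀ * J) ((M t * Φ t)ᵀ * J) t := by
      have := (mulCLM n).hasDerivAt_of_bilinear (fun _ => hT) (fun _ => hasDerivAt_const t J)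
      refine this.congr_deriv ?_
      show (Φ t)ᵀ * 0 + (M t * Φ t)ᵀ * J = _
      simp
    have h2 := (mulCLM n).hasDerivAt_of_bilinear (fun _ => h1) (fun _ => hΦ t)
    replace h2 : HasDerivAt (fun t => (Φ t)ᵀ * J * Φ t)
        ((Φ t)ᵀ * J * (M t * Φ t) + (M t * Φ t)ᵀ * J * Φ t) t := h2
    have hzero : (Φ t)ᵀ * J * (M t * Φ t) + (M t * Φ t)ᵀ * J * Φ t = 0 := by
      have h3 : (Φ t)ᵀ * J * (M t * Φ t) + (M t * Φ t)ᵀ * J * Φ t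
          = (Φ t)ᵀ * (((M t)ᵀ * J + J * M t) * Φ t) := by
        rw [Matrix.transpose_mul]; noncomm_ring
      rw [h3, hkey t]; simp
    rwa [hzero] at h2
  have hconst : ∀ t, (Φ t)ᵀ * J * Φ t = J := by
    intro t
    have h := is_const_of_deriv_eq_zero (f := fun t => (Φ t)ᵀ * J * Φ t)
      (fun x => (hg x).differentiableAt) (fun x => (hg x).deriv) t s
    simpa [hΦs] using h
  intro t
  -- Φ J Φᵀ = J as well
  have hleft : ((-J) * (Φ t)ᵀ * J) * Φ t = 1 := by
    calc ((-J) * (Φ t)ᵀ * J) * Φ t = -(J * ((Φ t)ᵀ * J * Φ t)) := by noncomm_ring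
    _ = -(J * J) := by rw [hconst t]
    _ = 1 := by rw [hJJ]; simp
  have hright : Φ t * ((-J) * (Φ t)ᵀ * J) = 1 := mul_eq_one_comm.mp hleft
  have hJPhiT : Φ t * J * (Φ t)ᵀ = J := by
    have h1 : Φ t * J * (Φ t)ᵀ * (J * J) = -J := by
      calc Φ t * J * (Φ t)ᵀ * (J * J)
          = -(Φ t * ((-J) * (Φ t)ᵀ * J)) * J := by noncomm_ring
      _ = -J := by rw [hright]; simp
    rw [hJJ] at h1
    simpa using h1
  -- extract blocks
  obtain ⟨P11, P12, P21, P22, hblk⟩ :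
      ∃ a b c d, Φ t = Matrix.fromBlocks a b c d ∧
        (Φ t).toBlocks₁₁ = a ∧ (Φ t).toBlocks₁₂ = b ∧
        (Φ t).toBlocks₂₁ = c ∧ (Φ t).toBlocks₂₂ = d :=
    ⟨_, _, _, _, (Matrix.fromBlocks_toBlocks _).symm, rfl, rfl, rfl, rfl⟩
  obtain ⟨hblk, hb11, hb12, hb21, hb22⟩ := hblk
  have hc1 := hconst t
  have hc2 := hJPhiT
  rw [hblk] at hc1 hc2
  simp only [hJ, Matrix.fromBlocks_transpose, Matrix.fromBlocks_multiply,
    Matrix.mul_zero, Matrix.zero_mul, Matrix.mul_one, Matrix.one_mul,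
    Matrix.mul_neg, Matrix.neg_mul, zero_add, add_zero, Matrix.mul_one] at hc1 hc2
  have e11 := congrArg Matrix.toBlocks₁₁ hc1
  have e12 := congrArg Matrix.toBlocks₁₂ hc1
  have e22 := congrArg Matrix.toBlocks₂₂ hc1
  have f11 := congrArg Matrix.toBlocks₁₁ hc2
  have f12 := congrArg Matrix.toBlocks₁₂ hc2
  have f22 := congrArg Matrix.toBlocks₂₂ hc2
  simp only [Matrix.toBlocks_fromBlocks₁₁, Matrix.toBlocks_fromBlocks₁₂,
    Matrix.toBlocks_fromBlocks₂₂] at e11 e12 e22 f11 f12 f22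
  rw [SymplecticBlocks, hb11, hb12, hb21, hb22]
  refine ⟨?_, ?_, ?_, ?_, ?_, ?_⟩
  · rw [← e12]; noncomm_ring
  · rw [← e22]; noncomm_ring
  · calc P21ᵀ * P11 - P11ᵀ * P21 = -(-(P21ᵀ * P11) + P11ᵀ * P21) := by noncomm_ring
    _ = 0 := by rw [e11, neg_zero]
  · rw [← f12]; noncomm_ring
  · calc P12 * P11ᵀ - P11 * P12ᵀ = -(-(P12 * P11ᵀ) + P11 * P12ᵀ) := by noncomm_ring
    _ = 0 := by rw [f11, neg_zero]
  · rw [← f22]; noncomm_ring
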